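/- For fixed β ∈ [0,1), the limit as q → 0⁺ of the series ∑_{k=1}^{∞} 2π sin(2kβπ) / ( (log q) · sinh(2kπ²/log q) ) equals 1/2 − β if β > 0, and equals 0 if β = 0. -/

import Mathlib

open Filter Real Finset

/-! ### Auxiliary lemmas -/

/-- Abel summation bound: if the partial sums of `a` are bounded by `B` and `c` is a
nonnegative antitone sequence, then the partial sums of `a * c` are bounded by `2 * B * c 0`. -/
private lemma abel_sum_bound (a c : ℕ → ℝ) (B : ℝ)
    (hc : ∀ n, c (n + 1) ≤ c n) (hc0 : ∀ n, 0 ≤ c n)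
    (hS : ∀ n, |∑ i ∈ range n, a i| ≤ B) (M : ℕ) :
    |∑ i ∈ range M, a i * c i| ≤ 2 * B * c 0 := by
  have hB : 0 ≤ B := le_trans (abs_nonneg _) (hS 1)
  have hmono : Antitone c := antitone_nat_of_succ_le hc
  rcases Nat.eq_zero_or_pos M with rfl | hM
  · simpa using mul_nonneg (by linarith : (0:ℝ) ≤ 2 * B) (hc0 0)
  have key : ∑ i ∈ range M, a i * c i
      = c (M - 1) * (∑ i ∈ range M, a i)
        - ∑ i ∈ range (M - 1), (c (i + 1) - c i) * (∑ j ∈ range (i + 1), a j) := by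
    have h := Finset.sum_range_by_parts c a M
    simp only [smul_eq_mul] at h
    rw [← h]
    exact Finset.sum_congr rfl fun i _ => mul_comm _ _
  rw [key]
  have h1 : |c (M - 1) * ∑ i ∈ range M, a i| ≤ c 0 * B := by
    rw [abs_mul, abs_of_nonneg (hc0 _)]
    exact mul_le_mul (hmono (Nat.zero_le _)) (hS M) (abs_nonneg _) (hc0 0)
  have h2 : |∑ i ∈ range (M - 1), (c (i + 1) - c i) * (∑ j ∈ range (i + 1), a j)|
      ≤ ∑ i ∈ range (M - 1), (c i - c (i + 1)) * B := by
    refine (Finset.abs_sum_le_sum_abs _ _).trans (Finset.sum_le_sum fun i _ => ?_)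
    rw [abs_mul, abs_sub_comm, abs_of_nonneg (sub_nonneg.2 (hc i))]
    exact mul_le_mul_of_nonneg_left (hS _) (sub_nonneg.2 (hc i))
  have h3 : ∑ i ∈ range (M - 1), (c i - c (i + 1)) * B = (c 0 - c (M - 1)) * B := by
    rw [← Finset.sum_mul, Finset.sum_range_sub' c]
  have h4 := (abs_sub _ _).trans (add_le_add h1 (h2.trans_eq h3))
  have h5 : c (M - 1) ≤ c 0 := hmono (Nat.zero_le _)
  have h6 : 0 ≤ c (M - 1) := hc0 _
  nlinarith [hc0 0]

/-- Tail bound for a series with bounded partial sums of `a` and antitone nonnegative `c`. -/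
private lemma abel_head_bound (a c : ℕ → ℝ) (B l : ℝ)
    (hc : ∀ n, c (n + 1) ≤ c n) (hc0 : ∀ n, 0 ≤ c n)
    (hS : ∀ n, |∑ i ∈ range n, a i| ≤ B)
    (hl : Tendsto (fun n => ∑ i ∈ range n, a i * c i) atTop (nhds l)) (N : ℕ) :
    |l - ∑ i ∈ range N, a i * c i| ≤ 4 * B * c N := by
  have hshift : ∀ M, |∑ i ∈ range M, a (N + i) * c (N + i)| ≤ 4 * B * c N := by
    intro M
    have h := abel_sum_bound (fun i => a (N + i)) (fun i => c (N + i)) (2 * B)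
      (fun n => hc (N + n)) (fun n => hc0 (N + n))
      (fun n => by
        have hsum : ∑ i ∈ range n, a (N + i)
            = (∑ i ∈ range (N + n), a i) - ∑ i ∈ range N, a i := by
          rw [Finset.sum_range_add]; ring
        rw [hsum]
        calc |(∑ i ∈ range (N + n), a i) - ∑ i ∈ range N, a i|
            ≤ |∑ i ∈ range (N + n), a i| + |∑ i ∈ range N, a i| := abs_sub _ _
          _ ≤ 2 * B := by linarith [hS (N + n), hS N]) M
    have heq : (2 : ℝ) * (2 * B) * c (N + 0) = 4 * B * c N := by rw [Nat.add_zero]; ring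
    linarith [h]
  have hNn : Tendsto (fun n : ℕ => N + n) atTop atTop :=
    (tendsto_add_atTop_nat N).congr fun n => Nat.add_comm n N
  have h3 : Tendsto (fun n => ∑ i ∈ range n, a (N + i) * c (N + i)) atTop
      (nhds (l - ∑ i ∈ range N, a i * c i)) := by
    have h2 := ((hl.comp hNn).sub_const (∑ i ∈ range N, a i * c i))
    refine h2.congr fun n => ?_
    simp only [Function.comp_apply]
    rw [Finset.sum_range_add]
    ring
  exact le_of_tendsto h3.abs (Eventually.of_forall hshift)

/-- Bound on partial sums of `sin ((i+1)θ)`. -/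
private lemma sin_sum_bound {θ : ℝ} (hs : 0 < Real.sin (θ / 2)) (n : ℕ) :
    |∑ i ∈ range n, Real.sin (((i : ℝ) + 1) * θ)| ≤ 1 / Real.sin (θ / 2) := by
  have key : (2 * Real.sin (θ / 2)) * ∑ i ∈ range n, Real.sin (((i : ℝ) + 1) * θ)
      = Real.cos ((0 : ℕ) * θ + θ / 2) - Real.cos ((n : ℝ) * θ + θ / 2) := by
    rw [Finset.mul_sum]
    have hterm : ∀ i : ℕ, 2 * Real.sin (θ / 2) * Real.sin (((i : ℝ) + 1) * θ)
        = (fun j : ℕ => Real.cos ((j : ℝ) * θ + θ / 2)) i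
          - (fun j : ℕ => Real.cos ((j : ℝ) * θ + θ / 2)) (i + 1) := by
      intro i
      have h := Real.cos_sub_cos ((i : ℝ) * θ + θ / 2) (((i : ℝ) + 1) * θ + θ / 2)
      rw [show ((i : ℝ) * θ + θ / 2 + (((i : ℝ) + 1) * θ + θ / 2)) / 2 = ((i : ℝ) + 1) * θ by ring,
        show ((i : ℝ) * θ + θ / 2 - (((i : ℝ) + 1) * θ + θ / 2)) / 2 = -(θ / 2) by ring,
        Real.sin_neg] at h
      simp only [Nat.cast_add, Nat.cast_one]
      linear_combination -h
    calc ∑ i ∈ range n, 2 * Real.sin (θ / 2) * Real.sin (((i : ℝ) + 1) * θ)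
        = ∑ i ∈ range n, ((fun j : ℕ => Real.cos ((j : ℝ) * θ + θ / 2)) i
          - (fun j : ℕ => Real.cos ((j : ℝ) * θ + θ / 2)) (i + 1)) :=
          Finset.sum_congr rfl fun i _ => hterm i
      _ = _ := Finset.sum_range_sub' _ n
  have hb : |(2 * Real.sin (θ / 2)) * ∑ i ∈ range n, Real.sin (((i : ℝ) + 1) * θ)| ≤ 2 := by
    rw [key]
    calc |Real.cos ((0 : ℕ) * θ + θ / 2) - Real.cos ((n : ℝ) * θ + θ / 2)|
        ≤ |Real.cos ((0 : ℕ) * θ + θ / 2)| + |Real.cos ((n : ℝ) * θ + θ / 2)| := abs_sub _ _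
      _ ≤ 2 := by linarith [Real.abs_cos_le_one ((0 : ℕ) * θ + θ / 2),
          Real.abs_cos_le_one ((n : ℝ) * θ + θ / 2)]
  rw [abs_mul, abs_of_pos (by linarith : (0:ℝ) < 2 * Real.sin (θ / 2))] at hb
  rw [le_div_iff₀ hs]
  nlinarith [abs_nonneg (∑ i ∈ range n, Real.sin (((i : ℝ) + 1) * θ))]

/-- The value of the conditionally convergent sine series, via Abel's limit theorem. -/
private lemma tendsto_partial_sin_div {θ : ℝ} (hθ0 : 0 < θ) (hθ2 : θ < 2 * π) :
    Tendsto (fun n => ∑ i ∈ range n, Real.sin (((i : ℝ) + 1) * θ) / ((i : ℝ) + 1)) atTop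
      (nhds (π / 2 - θ / 2)) := by
  have hπ := Real.pi_pos
  have hs : 0 < Real.sin (θ / 2) :=
    Real.sin_pos_of_pos_of_lt_pi (by linarith) (by linarith)
  -- Step 1: partial sums converge to some limit, by Dirichlet's test
  have hcauchy : CauchySeq (fun n => ∑ i ∈ range n,
      (fun i : ℕ => 1 / ((i : ℝ) + 1)) i • (fun i : ℕ => Real.sin (((i : ℝ) + 1) * θ)) i) := by
    refine Antitone.cauchySeq_series_mul_of_tendsto_zero_of_bounded ?_ ?_
      (fun n => sin_sum_bound hs n)
    · intro m n hmn
      have : (m : ℝ) + 1 ≤ (n : ℝ) + 1 := by exact_mod_cast by omega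
      exact one_div_le_one_div_of_le (by positivity) this
    · exact tendsto_one_div_add_atTop_nhds_zero_nat
  obtain ⟨l, hl⟩ := cauchySeq_tendsto_of_complete hcauchy
  have hl' : Tendsto (fun n => ∑ i ∈ range n,
      Real.sin (((i : ℝ) + 1) * θ) / ((i : ℝ) + 1)) atTop (nhds l) := by
    refine hl.congr fun n => Finset.sum_congr rfl fun i _ => ?_
    simp only [smul_eq_mul]
    ring
  -- Step 2: identify the limit via Abel's limit theorem
  set F : ℕ → ℝ := fun n => Real.sin ((n : ℝ) * θ) / (n : ℝ) with hFdef
  have hF0 : F 0 = 0 := by simp [hFdef]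
  have hFsum : Tendsto (fun n => ∑ i ∈ range n, F i) atTop (nhds l) := by
    rw [← tendsto_add_atTop_iff_nat 1]
    refine hl'.congr fun n => ?_
    rw [Finset.sum_range_succ' F n, hF0, add_zero]
    refine Finset.sum_congr rfl fun i _ => ?_
    simp only [hFdef]
    push_cast
    ring
  have hAbel := Real.tendsto_tsum_powerSeries_nhdsWithin_lt hFsum
  -- closed form of the power series
  set e : ℂ := Complex.exp (θ * Complex.I) with hedef
  have hclosed : ∀ x : ℝ, |x| < 1 →
      ∑' n, F n * x ^ n = -(Complex.log (1 - (x : ℂ) * e)).im := by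
    intro x hx
    have hz : ‖(x : ℂ) * e‖ < 1 := by
      rw [norm_mul, hedef, Complex.norm_exp_ofReal_mul_I, mul_one, Complex.norm_real,
        Real.norm_eq_abs]
      exact hx
    have h := Complex.hasSum_taylorSeries_neg_log hz
    have him := h.mapL Complex.imCLM
    have hterm : ∀ n : ℕ, Complex.imCLM (((x : ℂ) * e) ^ n / n) = F n * x ^ n := by
      intro n
      have h1 : ((x : ℂ) * e) ^ n / n
          = ((x ^ n / (n : ℝ) : ℝ) : ℂ) * Complex.exp ((((n : ℝ) * θ : ℝ)) * Complex.I) := by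
        rw [hedef, mul_pow, ← Complex.exp_nat_mul,
          show ((n : ℂ) * ((θ : ℂ) * Complex.I)) = ((((n : ℝ) * θ : ℝ)) : ℂ) * Complex.I by
            push_cast; ring]
        push_cast
        ring
      rw [h1]
      simp only [Complex.imCLM_apply, Complex.im_ofReal_mul, Complex.exp_ofReal_mul_I_im]
      simp only [hFdef]
      ring
    have him' : HasSum (fun n => F n * x ^ n) ((-Complex.log (1 - (x : ℂ) * e)).im) := by
      have hfe : (fun n : ℕ => Complex.imCLM (((x : ℂ) * e) ^ n / n)) = fun n => F n * x ^ n :=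
        funext hterm
      rw [hfe] at him
      simpa using him
    rw [him'.tsum_eq, Complex.neg_im]
  -- continuity of the closed form at 1
  have hre : (0:ℝ) < (1 - e).re := by
    have hcos : Real.cos θ < 1 := by
      rcases lt_or_eq_of_le (Real.cos_le_one θ) with h | h
      · exact h
      · exact absurd ((Real.cos_eq_one_iff_of_lt_of_lt (by linarith) hθ2).1 h) (ne_of_gt hθ0)
    simp only [hedef, Complex.sub_re, Complex.one_re, Complex.exp_ofReal_mul_I_re]
    linarith
  -- value of the closed form at 1
  have hval : -(Complex.log (1 - ((1 : ℝ) : ℂ) * e)).im = π / 2 - θ / 2 := by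
    have hc2 : Real.cos θ = 2 * Real.cos (θ / 2) ^ 2 - 1 := by
      have h := Real.cos_two_mul (θ / 2)
      rw [show 2 * (θ / 2) = θ by ring] at h
      exact h
    have hs2 : Real.sin θ = 2 * Real.sin (θ / 2) * Real.cos (θ / 2) := by
      have h := Real.sin_two_mul (θ / 2)
      rw [show 2 * (θ / 2) = θ by ring] at h
      exact h
    have hψmem : θ / 2 - π / 2 ∈ Set.Ioc (-π) π := by
      constructor <;> [linarith; linarith]
    have heq : 1 - ((1 : ℝ) : ℂ) * e
        = ((2 * Real.sin (θ / 2) : ℝ) : ℂ) * (Complex.cos ((θ / 2 - π / 2 : ℝ) : ℂ)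
            + Complex.sin ((θ / 2 - π / 2 : ℝ) : ℂ) * Complex.I) := by
      apply Complex.ext
      · simp only [hedef, Complex.sub_re, Complex.one_re, Complex.mul_re, Complex.ofReal_re,
          Complex.ofReal_im, Complex.add_re, Complex.add_im, Complex.mul_im, Complex.I_re,
          Complex.I_im, Complex.exp_ofReal_mul_I_re, Complex.exp_ofReal_mul_I_im]
        rw [← Complex.ofReal_cos, ← Complex.ofReal_sin]
        simp only [Complex.ofReal_re, Complex.ofReal_im]
        rw [Real.cos_sub (θ/2) (π/2)]
        simp only [Real.cos_pi_div_two, Real.sin_pi_div_two]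
        have hpy := Real.sin_sq_add_cos_sq (θ / 2)
        nlinarith [hpy, hc2]
      · simp only [hedef, Complex.sub_im, Complex.one_im, Complex.mul_im, Complex.ofReal_re,
          Complex.ofReal_im, Complex.add_re, Complex.add_im, Complex.mul_re, Complex.I_re,
          Complex.I_im, Complex.exp_ofReal_mul_I_re, Complex.exp_ofReal_mul_I_im]
        rw [← Complex.ofReal_cos, ← Complex.ofReal_sin]
        simp only [Complex.ofReal_re, Complex.ofReal_im]
        rw [Real.sin_sub (θ/2) (π/2)]
        simp only [Real.cos_pi_div_two, Real.sin_pi_div_two]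
        nlinarith [hs2]
    rw [heq, Complex.log_im, Complex.arg_mul_cos_add_sin_mul_I (by linarith) hψmem]
    ring
  -- conclude l = π/2 - θ/2 by uniqueness of limits along 𝓝[<] 1
  have hG : Tendsto (fun x : ℝ => -(Complex.log (1 - (x : ℂ) * e)).im)
      (nhdsWithin 1 (Set.Iio 1)) (nhds (π / 2 - θ / 2)) := by
    have h1 : Tendsto (fun x : ℝ => 1 - (x : ℂ) * e) (nhds 1) (nhds (1 - ((1:ℝ):ℂ) * e)) :=
      (continuousAt_const.sub ((Complex.continuous_ofReal.continuousAt).mul continuousAt_const))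
    have h2 : Tendsto (fun x : ℝ => Complex.log (1 - (x : ℂ) * e)) (nhds 1)
        (nhds (Complex.log (1 - ((1 : ℝ) : ℂ) * e))) :=
      h1.clog (Or.inl (by simpa using hre))
    have h3 := ((Complex.continuous_im.tendsto _).comp h2).neg
    rw [show -(Complex.log (1 - ((1:ℝ):ℂ) * e)).im = π / 2 - θ / 2 from hval] at h3
    exact h3.mono_left nhdsWithin_le_nhds
  have hG' : Tendsto (fun x : ℝ => ∑' n, F n * x ^ n)
      (nhdsWithin 1 (Set.Iio 1)) (nhds (π / 2 - θ / 2)) := by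
    refine hG.congr' ?_
    filter_upwards [Ioo_mem_nhdsLT_of_mem (a := (-1:ℝ)) (c := 1) (Set.mem_Ioc.2 ⟨by norm_num, le_refl (1:ℝ)⟩)] with x hx
    exact (hclosed x (abs_lt.2 ⟨hx.1, hx.2⟩)).symm
  have : l = π / 2 - θ / 2 := tendsto_nhds_unique hAbel hG'
  rwa [this] at hl'

private lemma key_denom {t : ℝ} (ht : t < 0) (u : ℝ) :
    t * Real.sinh (u / t) = (-t) * Real.sinh (u / (-t)) := by
  rw [show u / t = -(u / (-t)) by rw [div_neg, neg_neg], Real.sinh_neg]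
  ring

private lemma denom_ge {t : ℝ} (ht : t < 0) {u : ℝ} (hu : 0 < u) :
    u ≤ t * Real.sinh (u / t) := by
  rw [key_denom ht u]
  have h1 : u / (-t) ≤ Real.sinh (u / (-t)) :=
    Real.self_le_sinh_iff.2 (div_nonneg hu.le (by linarith))
  calc u = (-t) * (u / (-t)) := by
        rw [mul_comm, div_mul_cancel₀ u (neg_ne_zero.mpr ht.ne)]
    _ ≤ (-t) * Real.sinh (u / (-t)) := mul_le_mul_of_nonneg_left h1 (by linarith)

private lemma denom_mono {t : ℝ} (ht : t < 0) {u v : ℝ} (huv : u ≤ v) :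
    t * Real.sinh (u / t) ≤ t * Real.sinh (v / t) := by
  rw [key_denom ht u, key_denom ht v]
  have h1 : u / (-t) ≤ v / (-t) := by gcongr; linarith
  exact mul_le_mul_of_nonneg_left (Real.sinh_le_sinh.2 h1) (by linarith)

private lemma denom_tendsto {u : ℝ} (hu : 0 < u) :
    Tendsto (fun t : ℝ => t * Real.sinh (u / t)) atBot (nhds u) := by
  have hslope : Tendsto (fun y : ℝ => Real.sinh y / y) (nhdsWithin 0 {0}ᶜ) (nhds 1) := by
    have h := Real.hasDerivAt_sinh 0
    rw [Real.cosh_zero] at h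
    refine (hasDerivAt_iff_tendsto_slope.1 h).congr fun y => ?_
    rw [slope_def_field, Real.sinh_zero, sub_zero, sub_zero]
  have hy : Tendsto (fun t : ℝ => u / t) atBot (nhdsWithin 0 {0}ᶜ) := by
    refine tendsto_nhdsWithin_of_tendsto_nhds_of_eventually_within _ ?_ ?_
    · have h0 : Tendsto (fun t : ℝ => t⁻¹) atBot (nhds 0) := by
        have h1 := (tendsto_neg_atBot_atTop : Tendsto (fun t : ℝ => -t) atBot atTop).inv_tendsto_atTop
        have h2 := h1.neg
        rw [neg_zero] at h2
        refine h2.congr fun t => ?_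
        simp only [Pi.inv_apply]
        rw [inv_neg, neg_neg]
      have h1 : Tendsto (fun t : ℝ => u * t⁻¹) atBot (nhds (u * 0)) := h0.const_mul u
      rw [mul_zero] at h1
      exact h1.congr fun t => (div_eq_mul_inv u t).symm
    · filter_upwards [eventually_lt_atBot (0 : ℝ)] with t ht
      exact (div_neg_of_pos_of_neg hu ht).ne
  have h3 := hslope.comp hy
  have h4 := h3.const_mul u
  rw [mul_one] at h4
  refine Tendsto.congr' ?_ h4
  filter_upwards [eventually_lt_atBot (0 : ℝ)] with t ht
  have htne : t ≠ 0 := ht.ne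
  have hune : u ≠ 0 := hu.ne'
  simp only [Function.comp_apply]
  field_simp

/-- For fixed `β ∈ [0,1)`, the series
`∑_{k≥1} 2π sin(2kβπ)/((log q) sinh(2kπ²/log q))` converges, as `q → 0⁺`, to `1/2 - β` if
`β > 0`, and to `0` if `β = 0`. -/
theorem fourier_series_limit_q_to_zero (β : ℝ) (hβ0 : 0 ≤ β) (hβ1 : β < 1) :
    Tendsto
      (fun q : ℝ =>
        ∑' k : ℕ, 2 * π * Real.sin (2 * ((k : ℝ) + 1) * β * π) /
          (Real.log q * Real.sinh (2 * ((k : ℝ) + 1) * π ^ 2 / Real.log q)))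
      (nhdsWithin 0 (Set.Ioo (0 : ℝ) 1))
      (nhds (if β = 0 then 0 else 1 / 2 - β)) := by
  have hπ := Real.pi_pos
  rcases eq_or_lt_of_le hβ0 with hβ | hβ
  · -- case β = 0
    rw [if_pos hβ.symm]
    have hzero : ∀ q : ℝ, ∑' k : ℕ, 2 * π * Real.sin (2 * ((k : ℝ) + 1) * β * π) /
        (Real.log q * Real.sinh (2 * ((k : ℝ) + 1) * π ^ 2 / Real.log q)) = 0 := by
      intro q
      convert tsum_zero with k
      rw [← hβ]
      norm_num
    simp only [hzero]
    exact tendsto_const_nhds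
  · -- case β > 0
    rw [if_neg hβ.ne']
    set θ : ℝ := 2 * β * π with hθdef
    have hθ0 : 0 < θ := by positivity
    have hθ2 : θ < 2 * π := by nlinarith
    have hshalf : 0 < Real.sin (θ / 2) :=
      Real.sin_pos_of_pos_of_lt_pi (by positivity) (by nlinarith)
    set B : ℝ := 1 / Real.sin (θ / 2) with hBdef
    have hB0 : 0 < B := by positivity
    set a : ℕ → ℝ := fun k => Real.sin (((k : ℝ) + 1) * θ) with hadef
    have hSa : ∀ n, |∑ i ∈ range n, a i| ≤ B := fun n => sin_sum_bound hshalf n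
    set cinf : ℕ → ℝ := fun k => 1 / (((k : ℝ) + 1) * π) with hcinfdef
    have hcinf_anti : ∀ k, cinf (k + 1) ≤ cinf k := by
      intro k
      simp only [hcinfdef]
      push_cast
      apply one_div_le_one_div_of_le (by positivity)
      nlinarith
    have hcinf_nonneg : ∀ k, 0 ≤ cinf k := fun k => by positivity
    -- the limit of partial sums of `a * cinf`
    have hl : Tendsto (fun n => ∑ i ∈ range n, a i * cinf i) atTop (nhds (1 / 2 - β)) := by
      have h2 := (tendsto_partial_sin_div hθ0 hθ2).div_const π
      have h3 : (π / 2 - θ / 2) / π = 1 / 2 - β := by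
        rw [hθdef]; field_simp
      rw [h3] at h2
      refine h2.congr fun n => ?_
      rw [Finset.sum_div]
      refine Finset.sum_congr rfl fun i _ => ?_
      simp only [hadef, hcinfdef]
      rw [div_div, mul_one_div]
    -- the coefficients for each q
    set cq : ℝ → ℕ → ℝ := fun q k =>
      2 * π / (Real.log q * Real.sinh (2 * ((k : ℝ) + 1) * π ^ 2 / Real.log q)) with hcqdef
    have hu : ∀ k : ℕ, (0 : ℝ) < 2 * ((k : ℝ) + 1) * π ^ 2 := fun k => by positivity
    have hDpos : ∀ q ∈ Set.Ioo (0 : ℝ) 1, ∀ k : ℕ,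
        0 < Real.log q * Real.sinh (2 * ((k : ℝ) + 1) * π ^ 2 / Real.log q) :=
      fun q hq k => lt_of_lt_of_le (hu k) (denom_ge (Real.log_neg hq.1 hq.2) (hu k))
    have hcq_pos : ∀ q ∈ Set.Ioo (0 : ℝ) 1, ∀ k, 0 < cq q k :=
      fun q hq k => div_pos (by positivity) (hDpos q hq k)
    have hcq_le : ∀ q ∈ Set.Ioo (0 : ℝ) 1, ∀ k, cq q k ≤ cinf k := by
      intro q hq k
      have h1 : cq q k ≤ 2 * π / (2 * ((k : ℝ) + 1) * π ^ 2) :=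
        div_le_div_of_nonneg_left (by positivity) (hu k)
          (denom_ge (Real.log_neg hq.1 hq.2) (hu k))
      refine h1.trans_eq ?_
      simp only [hcinfdef]
      have hπ' : π ≠ 0 := hπ.ne'
      have hk : ((k : ℝ) + 1) ≠ 0 := by positivity
      field_simp
    have hcq_anti : ∀ q ∈ Set.Ioo (0 : ℝ) 1, ∀ k, cq q (k + 1) ≤ cq q k := by
      intro q hq k
      refine div_le_div_of_nonneg_left (by positivity) (hDpos q hq k) ?_
      have hm := denom_mono (Real.log_neg hq.1 hq.2)
        (u := 2 * ((k : ℝ) + 1) * π ^ 2) (v := 2 * (((k + 1 : ℕ) : ℝ) + 1) * π ^ 2)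
        (by push_cast; nlinarith)
      exact hm
    -- summability for each q
    have hsummable : ∀ q ∈ Set.Ioo (0 : ℝ) 1, Summable (fun k => a k * cq q k) := by
      intro q hq
      have ht : Real.log q < 0 := Real.log_neg hq.1 hq.2
      set s : ℝ := -Real.log q with hsdef
      have hs0 : 0 < s := by simp only [hsdef]; linarith
      set u0 : ℝ := 2 * π ^ 2 / s with hu0def
      have hu0 : 0 < u0 := by positivity
      have hgrow : ∀ k : ℕ, Real.sinh u0 * Real.cosh u0 ^ k ≤ Real.sinh (((k : ℝ) + 1) * u0) := by
        intro k
        induction k with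
        | zero => norm_num
        | succ n ih =>
          have h1 : (((n + 1 : ℕ) : ℝ) + 1) * u0 = ((n : ℝ) + 1) * u0 + u0 := by push_cast; ring
          rw [h1, Real.sinh_add]
          have hc1 : 1 ≤ Real.cosh (((n : ℝ) + 1) * u0) := Real.one_le_cosh _
          have hs1 : 0 < Real.sinh u0 := Real.sinh_pos_iff.2 hu0
          have hc0 : 0 < Real.cosh u0 := Real.cosh_pos u0
          have hs2 : 0 ≤ Real.sinh (((n : ℝ) + 1) * u0) :=
            (Real.sinh_pos_iff.2 (by positivity)).le
          rw [pow_succ, ← mul_assoc]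
          nlinarith [mul_le_mul_of_nonneg_right ih hc0.le]
      have hr1 : (Real.cosh u0)⁻¹ < 1 := inv_lt_one_of_one_lt₀ (Real.one_lt_cosh.2 hu0.ne')
      refine Summable.of_norm_bounded
        (g := fun k => (2 * π / (s * Real.sinh u0)) * ((Real.cosh u0)⁻¹) ^ k)
        ((summable_geometric_of_lt_one (by positivity) hr1).mul_left _) ?_
      intro k
      have hs1 : 0 < Real.sinh u0 := Real.sinh_pos_iff.2 hu0
      have hcqs : cq q k = 2 * π / (s * Real.sinh (2 * ((k : ℝ) + 1) * π ^ 2 / s)) := by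
        simp only [hcqdef]
        rw [key_denom ht (2 * ((k : ℝ) + 1) * π ^ 2), ← hsdef]
      have harg : 2 * ((k : ℝ) + 1) * π ^ 2 / s = ((k : ℝ) + 1) * u0 := by
        rw [hu0def]; ring
      have hbound : cq q k ≤ (2 * π / (s * Real.sinh u0)) * ((Real.cosh u0)⁻¹) ^ k := by
        rw [hcqs, harg]
        have h2 : 0 < s * (Real.sinh u0 * Real.cosh u0 ^ k) := by positivity
        have h3 : s * (Real.sinh u0 * Real.cosh u0 ^ k) ≤ s * Real.sinh (((k : ℝ) + 1) * u0) :=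
          mul_le_mul_of_nonneg_left (hgrow k) hs0.le
        refine (div_le_div_of_nonneg_left (by positivity) h2 h3).trans_eq ?_
        rw [inv_pow]
        have hsne : s ≠ 0 := hs0.ne'
        have hshne : Real.sinh u0 ≠ 0 := hs1.ne'
        have hchne : Real.cosh u0 ^ k ≠ 0 := (pow_pos (Real.cosh_pos u0) k).ne'
        field_simp
      calc ‖a k * cq q k‖ = |a k| * |cq q k| := abs_mul _ _
        _ ≤ 1 * cq q k := by
            rw [abs_of_pos (hcq_pos q hq k)]
            exact mul_le_mul_of_nonneg_right (by simpa [hadef] using Real.abs_sin_le_one _)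
              (hcq_pos q hq k).le
        _ ≤ _ := by rw [one_mul]; exact hbound
    -- pointwise convergence of the coefficients
    have hck : ∀ k : ℕ, Tendsto (fun q => cq q k) (nhdsWithin 0 (Set.Ioo (0 : ℝ) 1))
        (nhds (cinf k)) := by
      intro k
      have hlog : Tendsto Real.log (nhdsWithin 0 (Set.Ioo (0 : ℝ) 1)) atBot :=
        Real.tendsto_log_nhdsGT_zero.mono_left
          (nhdsWithin_mono 0 Set.Ioo_subset_Ioi_self)
      have hd := (denom_tendsto (hu k)).comp hlog
      have h1 := (tendsto_const_nhds (x := 2 * π)).div hd (ne_of_gt (hu k))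
      have h2 : 2 * π / (2 * ((k : ℝ) + 1) * π ^ 2) = cinf k := by
        simp only [hcinfdef]
        have hπ' : π ≠ 0 := hπ.ne'
        have hk : ((k : ℝ) + 1) ≠ 0 := by positivity
        field_simp
      rw [h2] at h1
      exact h1
    -- the ε-argument
    rw [Metric.tendsto_nhds]
    intro ε hε
    obtain ⟨N, hN⟩ : ∃ N : ℕ, 8 * B * cinf N < ε / 2 := by
      have h0 : Tendsto (fun N : ℕ => 8 * B * cinf N) atTop (nhds 0) := by
        have h1 := tendsto_one_div_add_atTop_nhds_zero_nat.const_mul (8 * B / π)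
        rw [mul_zero] at h1
        refine h1.congr fun n => ?_
        simp only [hcinfdef]
        field_simp
      exact (h0.eventually (gt_mem_nhds (by positivity : (0 : ℝ) < ε / 2))).exists
    have hhead : Tendsto (fun q => ∑ i ∈ range N, a i * cq q i)
        (nhdsWithin 0 (Set.Ioo (0 : ℝ) 1)) (nhds (∑ i ∈ range N, a i * cinf i)) :=
      tendsto_finset_sum _ fun i _ => (hck i).const_mul (a i)
    filter_upwards [self_mem_nhdsWithin,
      Metric.tendsto_nhds.1 hhead (ε / 2) (by linarith)] with q hq hq2
    have hfq : (fun k : ℕ => 2 * π * Real.sin (2 * ((k : ℝ) + 1) * β * π) /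
        (Real.log q * Real.sinh (2 * ((k : ℝ) + 1) * π ^ 2 / Real.log q)))
        = fun k => a k * cq q k := by
      funext k
      simp only [hadef, hcqdef]
      rw [show 2 * ((k : ℝ) + 1) * β * π = ((k : ℝ) + 1) * θ by rw [hθdef]; ring]
      ring
    rw [hfq]
    have hsum := hsummable q hq
    have htail1 := abel_head_bound a (cq q) B (∑' k, a k * cq q k) (hcq_anti q hq)
      (fun k => (hcq_pos q hq k).le) hSa hsum.hasSum.tendsto_sum_nat N
    have htail2 := abel_head_bound a cinf B (1 / 2 - β) hcinf_anti hcinf_nonneg hSa hl N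
    have hle : cq q N ≤ cinf N := hcq_le q hq N
    rw [Real.dist_eq] at hq2 ⊢
    have htri1 := abs_sub_le (∑' k, a k * cq q k) (∑ i ∈ range N, a i * cq q i) (1 / 2 - β)
    have htri2 := abs_sub_le (∑ i ∈ range N, a i * cq q i) (∑ i ∈ range N, a i * cinf i)
      (1 / 2 - β)
    rw [abs_sub_comm (1 / 2 - β) (∑ i ∈ range N, a i * cinf i)] at htail2
    nlinarith [hcinf_nonneg N]
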